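/- Fix real constants k_B > 0, T₀ > 0, c > 0 and a natural number N ≥ 1. Define A(T) = −k_B T · ( N·(ln(T/T₀) + c T/T₀) − ln(N!) ) for T > 0. Then for every T > 0: (i) the internal energy U(T) = A(T) − T·A'(T) equals N k_B T (1 + c T/T₀), and (ii) the heat capacity C(T) = U'(T) equals N k_B (1 + 2 c T/T₀); in particular C(T) depends linearly (affinely) on T. -/

import Mathlib

theorem stmt_19 (kB T₀ c : ℝ) (N : ℕ)
    (hkB : 0 < kB) (hT₀ : 0 < T₀) (hc : 0 < c) (hN : 1 ≤ N)
    (A : ℝ → ℝ)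
    (hA : ∀ T, 0 < T → A T =
      -(kB * T) * ((N : ℝ) * (Real.log (T / T₀) + c * T / T₀)
        - Real.log (Nat.factorial N : ℝ))) :
    ∀ T, 0 < T →
      (A T - T * deriv A T = (N : ℝ) * kB * T * (1 + c * T / T₀)) ∧
      (deriv (fun T' => A T' - T' * deriv A T') T = (N : ℝ) * kB * (1 + 2 * c * T / T₀)) := by
  set L := Real.log (Nat.factorial N : ℝ) with hLdef
  have key : ∀ T, 0 < T → HasDerivAt A
      (-kB * ((N : ℝ) * (Real.log (T / T₀) + c * T / T₀) - L)
        - kB * T * ((N : ℝ) * (1 / T + c / T₀))) T := by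
    intro T hT
    have hT0 : T ≠ 0 := hT.ne'
    have hTT₀ : T / T₀ ≠ 0 := div_ne_zero hT0 hT₀.ne'
    have h1 : HasDerivAt (fun x : ℝ => x / T₀) (1 / T₀) T := by
      simpa using (hasDerivAt_id T).div_const T₀
    have h2 : HasDerivAt (fun x : ℝ => Real.log (x / T₀)) (1 / T) T := by
      have := (Real.hasDerivAt_log hTT₀).comp T h1
      exact this.congr_deriv (by field_simp)
    have hcx : HasDerivAt (fun x : ℝ => c * x / T₀) (c / T₀) T := by
      simpa [mul_div_assoc] using ((hasDerivAt_id T).const_mul c).div_const T₀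
    have h3 : HasDerivAt (fun x : ℝ => (N : ℝ) * (Real.log (x / T₀) + c * x / T₀) - L)
        ((N : ℝ) * (1 / T + c / T₀)) T :=
      ((h2.add hcx).const_mul (N : ℝ)).sub_const L
    have h6 : HasDerivAt (fun x : ℝ => -(kB * x)) (-kB) T := by
      exact (((hasDerivAt_id T).const_mul kB).neg).congr_deriv (by simp)
    have h4 := h6.mul h3
    have hev : A =ᶠ[nhds T]
        fun x => -(kB * x) * ((N : ℝ) * (Real.log (x / T₀) + c * x / T₀) - L) := by
      filter_upwards [Ioi_mem_nhds hT] with x hx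
      exact hA x hx
    have h5 := h4.congr_of_eventuallyEq hev
    exact h5.congr_deriv (by ring)
  have Ueq : ∀ T, 0 < T →
      A T - T * deriv A T = (N : ℝ) * kB * T * (1 + c * T / T₀) := by
    intro T hT
    have hd := (key T hT).deriv
    rw [hA T hT, hd]
    field_simp
    ring
  intro T hT
  refine ⟨Ueq T hT, ?_⟩
  have hev : (fun T' => A T' - T' * deriv A T') =ᶠ[nhds T]
      fun x => (N : ℝ) * kB * x * (1 + c * x / T₀) := by
    filter_upwards [Ioi_mem_nhds hT] with x hx
    exact Ueq x hx
  rw [hev.deriv_eq]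
  have hcx : HasDerivAt (fun x : ℝ => c * x / T₀) (c / T₀) T := by
    simpa [mul_div_assoc] using ((hasDerivAt_id T).const_mul c).div_const T₀
  have h7 : HasDerivAt (fun x : ℝ => 1 + c * x / T₀) (c / T₀) T := hcx.const_add 1
  have h8 : HasDerivAt (fun x : ℝ => (N : ℝ) * kB * x) ((N : ℝ) * kB) T := by
    simpa using (hasDerivAt_id T).const_mul ((N : ℝ) * kB)
  have h9 := h8.mul h7
  have : deriv (fun x : ℝ => (N : ℝ) * kB * x * (1 + c * x / T₀)) T
      = (N : ℝ) * kB * (1 + c * T / T₀) + (N : ℝ) * kB * T * (c / T₀) := h9.deriv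
  rw [this]
  ring
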